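/- Let M be the n×n matrix over F = ℝ((ε₁))···((ε_n)) with entries M_{i+j,j} = ε_j^i (index i+j taken modulo n), i.e. the j-th column is ρ^{j-1}·b(ε_j) for the cyclic shift ρ and b(ε)=(1,ε,...,ε^{n-1})^T. Then det M has sign +1 (its leading monomial has coefficient 1). -/

import Mathlib

/-- The determinant sign computation in the proof of Proposition 3.4: in the ordered-field
setting `F = ℝ((ε₁))⋯((ε_n))` (formalized as any linearly ordered field `F` with an order
embedding `φ : ℝ →+* F` and positive elements `ε₁, …, ε_n` such that `ε₁` is infinitesimal
and each `ε_j` (`j > i`) is infinitesimally smaller than every power of `ε_i`), the matrix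
`M` with entries `M_{r,j} = ε_j^{(r-j) mod n}` (i.e. `j`-th column `ρ^{j-1}·b(ε_j)` for the
cyclic shift `ρ` and `b(ε) = (1, ε, …, ε^{n-1})ᵀ`) has positive determinant: its leading
monomial has coefficient `1`. -/
theorem shintani_det_sign
    (n : ℕ) (hn : 1 ≤ n)
    (F : Type) [Field F] [LinearOrder F] [IsStrictOrderedRing F] (φ : ℝ →+* F) (hφ : StrictMono φ)
    (ε : Fin n → F)
    (hpos : ∀ i, 0 < ε i)
    (hsmall : ∀ r : ℝ, 0 < r → ε ⟨0, hn⟩ < φ r)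
    (hchain : ∀ i j : Fin n, i < j → ∀ (r : ℝ) (k : ℕ), 0 < r → ε j < φ r * (ε i) ^ k)
    (M : Matrix (Fin n) (Fin n) F)
    (hM : ∀ r j : Fin n, M r j = (ε j) ^ ((n + (r : ℕ) - (j : ℕ)) % n)) :
    0 < M.det := by
  classical
  -- every ε j is infinitesimal
  have hεlt : ∀ (j : Fin n) (r : ℝ), 0 < r → ε j < φ r := by
    intro j r hr
    rcases eq_or_ne j ⟨0, hn⟩ with h | h
    · rw [h]; exact hsmall r hr
    · have h0 : (⟨0, hn⟩ : Fin n) < j := by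
        refine lt_of_le_of_ne ?_ (Ne.symm h)
        exact Fin.mk_le_of_le_val (Nat.zero_le _)
      simpa using hchain ⟨0, hn⟩ j h0 r 0 hr
  have hε1 : ∀ j, ε j < 1 := fun j => by simpa using hεlt j 1 one_pos
  set t : Equiv.Perm (Fin n) → F := fun σ => ∏ i, M (σ i) i with ht
  have htpos : ∀ σ, 0 < t σ := fun σ =>
    Finset.prod_pos fun i _ => by rw [hM]; exact pow_pos (hpos _) _
  have ht1 : t 1 = 1 := by
    simp [ht, hM, Nat.add_sub_cancel, Nat.mod_self]
  -- bound for non-identity terms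
  have htb : ∀ σ : Equiv.Perm (Fin n), σ ≠ 1 → ∀ r : ℝ, 0 < r → t σ < φ r := by
    intro σ hσ r hr
    obtain ⟨j, hj⟩ : ∃ j, σ j ≠ j := by
      by_contra h
      push_neg at h
      exact hσ (Equiv.ext h)
    have haj : 1 ≤ (n + ((σ j : ℕ)) - (j : ℕ)) % n := by
      rcases lt_or_ge (σ j : ℕ) (j : ℕ) with h | h
      · have hjn := j.isLt
        have h1 : n + (σ j : ℕ) - (j : ℕ) < n := by omega
        rw [Nat.mod_eq_of_lt h1]; omega
      · have hne : (σ j : ℕ) ≠ (j : ℕ) := fun hh => hj (Fin.ext hh)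
        have hσn := (σ j).isLt
        have heq : n + (σ j : ℕ) - (j : ℕ) = n + ((σ j : ℕ) - (j : ℕ)) := by omega
        rw [heq, Nat.add_mod_left, Nat.mod_eq_of_lt (by omega)]
        omega
    have hle1 : ∀ i : Fin n, M (σ i) i ≤ 1 := by
      intro i
      rw [hM]
      exact pow_le_one₀ (hpos _).le (hε1 _).le
    calc t σ = M (σ j) j * ∏ i ∈ Finset.univ.erase j, M (σ i) i :=
          (Finset.mul_prod_erase Finset.univ _ (Finset.mem_univ j)).symm
      _ ≤ M (σ j) j * 1 := by
          refine mul_le_mul_of_nonneg_left ?_ (by rw [hM]; exact pow_nonneg (hpos _).le _)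
          exact Finset.prod_le_one (fun i _ => by rw [hM]; exact pow_nonneg (hpos _).le _)
              (fun i _ => hle1 i)
      _ = M (σ j) j := mul_one _
      _ ≤ ε j := by
          rw [hM]
          calc (ε j) ^ ((n + ((σ j : ℕ)) - (j : ℕ)) % n) ≤ (ε j) ^ 1 :=
                pow_le_pow_of_le_one (hpos _).le (hε1 _).le haj
            _ = ε j := pow_one _
      _ < φ r := hεlt j r hr
  -- determinant expansion
  rw [Matrix.det_apply]
  have hsplit : ∑ σ : Equiv.Perm (Fin n), Equiv.Perm.sign σ • t σ
      = Equiv.Perm.sign (1 : Equiv.Perm (Fin n)) • t 1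
        + ∑ σ ∈ Finset.univ.erase 1, Equiv.Perm.sign σ • t σ :=
    (Finset.add_sum_erase _ _ (Finset.mem_univ 1)).symm
  have h1 : Equiv.Perm.sign (1 : Equiv.Perm (Fin n)) • t 1 = 1 := by
    simp [ht1]
  set s : Finset (Equiv.Perm (Fin n)) := Finset.univ.erase 1 with hs
  set m : ℕ := s.card with hm
  have hmlt : m < Nat.factorial n := by
    have : m = Fintype.card (Equiv.Perm (Fin n)) - 1 := by
      rw [hm, hs, Finset.card_erase_of_mem (Finset.mem_univ _), Finset.card_univ]
    rw [this, Fintype.card_perm, Fintype.card_fin]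
    exact Nat.sub_lt (Nat.factorial_pos n) one_pos
  set c : ℝ := 1 / ((Nat.factorial n : ℕ) : ℝ) with hc
  have hcpos : (0:ℝ) < c := by
    rw [hc]; positivity
  have hterm : ∀ σ ∈ s, -(φ c) ≤ Equiv.Perm.sign σ • t σ := by
    intro σ hσs
    have hσne : σ ≠ 1 := (Finset.mem_erase.mp hσs).1
    have hlt := htb σ hσne c hcpos
    rcases Int.units_eq_one_or (Equiv.Perm.sign σ) with h | h
    · rw [h]
      simp only [one_smul]
      have := htpos σ
      have hφc : 0 < φ c := lt_trans this hlt
      linarith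
    · rw [h]
      simp only [Units.neg_smul, one_smul, neg_le_neg_iff]
      exact hlt.le
  have hSbound : -(φ ((m : ℝ) * c)) ≤ ∑ σ ∈ s, Equiv.Perm.sign σ • t σ := by
    have h2 : m • (-(φ c)) ≤ ∑ σ ∈ s, Equiv.Perm.sign σ • t σ :=
      Finset.card_nsmul_le_sum s _ _ hterm
    calc -(φ ((m : ℝ) * c)) = m • (-(φ c)) := by
          rw [map_mul, nsmul_eq_mul, map_natCast]; ring
      _ ≤ _ := h2
  have hmc1 : (m : ℝ) * c < 1 := by
    rw [hc]
    have hf : (0:ℝ) < ((Nat.factorial n : ℕ) : ℝ) := by positivity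
    rw [mul_one_div, div_lt_one hf]
    exact_mod_cast hmlt
  have hφlt : φ ((m : ℝ) * c) < 1 := by
    have := hφ hmc1
    rwa [map_one] at this
  rw [hsplit, h1]
  have : -(φ ((m : ℝ) * c)) > -1 := by linarith
  linarith [hSbound]
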